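/- Let G be a positive definite Hermitian M×M complex matrix, let W ∈ ℂ^{M×M} be invertible, and fix k with 1 ≤ k ≤ M. For w ∈ ℂ^M, let W_k(w) denote the matrix W with its k-th column replaced by w, and consider f(w) = w^H G w − 2 log|det W_k(w)| on the set of w for which W_k(w) is invertible. Then u = (W^H G)^{−1} e_k is nonzero, and the vector w* = u (u^H G u)^{−1/2} makes W_k(w*) invertible and globally minimizes f over all w with W_k(w) invertible. -/

import Mathlib

/- STATEMENT 13.
Here `M ≥ 1` and matrices are indexed by `Fin M`; `k : Fin M`.
`W_k(w)` is `W.updateCol k w`, and for the positive real `uᴴ G u`, its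
`−1/2` power is `(Real.sqrt (uᴴ G u).re)⁻¹`. -/

open Matrix
open scoped ComplexOrder

/-- `f(w) = wᴴ G w − 2 log|det W_k(w)|`. -/
noncomputable def fCost {M : ℕ} (G : Matrix (Fin M) (Fin M) ℂ)
    (W : Matrix (Fin M) (Fin M) ℂ) (k : Fin M) (w : Fin M → ℂ) : ℝ :=
  (star w ⬝ᵥ (G *ᵥ w)).re - 2 * Real.log ‖(W.updateCol k w).det‖

private lemma cs_aux {M : ℕ} (x y : Fin M → ℂ) :
    ‖star x ⬝ᵥ y‖ ^ 2 ≤ (star x ⬝ᵥ x).re * (star y ⬝ᵥ y).re := by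
  have h := norm_inner_le_norm (𝕜 := ℂ) (WithLp.toLp 2 x)
      (WithLp.toLp 2 y)
  rw [EuclideanSpace.inner_toLp_toLp, dotProduct_comm] at h
  have hx := norm_sq_eq_re_inner (𝕜 := ℂ) (WithLp.toLp 2 x)
  have hy := norm_sq_eq_re_inner (𝕜 := ℂ) (WithLp.toLp 2 y)
  rw [EuclideanSpace.inner_toLp_toLp, dotProduct_comm] at hx hy
  calc ‖star x ⬝ᵥ y‖ ^ 2
      ≤ (‖WithLp.toLp 2 x‖ * ‖WithLp.toLp 2 y‖) ^ 2 :=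
        pow_le_pow_left₀ (norm_nonneg _) h 2
    _ = (star x ⬝ᵥ x).re * (star y ⬝ᵥ y).re := by
        rw [mul_pow, hx, hy, RCLike.re_to_complex, RCLike.re_to_complex]

/-- `u = (Wᴴ G)⁻¹ e_k` is nonzero, and `w* = u (uᴴ G u)^{−1/2}` makes `W_k(w*)`
invertible and globally minimizes `f(w) = wᴴ G w − 2 log|det W_k(w)|` over all
`w` with `W_k(w)` invertible. -/
theorem ip_update_global_min (M : ℕ) (hM : 1 ≤ M)
    (G : Matrix (Fin M) (Fin M) ℂ) (hG : G.PosDef)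
    (W : Matrix (Fin M) (Fin M) ℂ) (hW : IsUnit W.det) (k : Fin M)
    (u : Fin M → ℂ) (hu : u = (Wᴴ * G)⁻¹ *ᵥ Pi.single k 1) :
    u ≠ 0 ∧
    ∀ ws : Fin M → ℂ,
      ws = (((Real.sqrt ((star u ⬝ᵥ (G *ᵥ u)).re))⁻¹ : ℝ) : ℂ) • u →
      IsUnit (W.updateCol k ws).det ∧
      ∀ w : Fin M → ℂ, IsUnit (W.updateCol k w).det →
        fCost G W k ws ≤ fCost G W k w := by
  have hGdet : IsUnit G.det := hG.det_pos.ne'.isUnit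
  have hWG : IsUnit (Wᴴ * G).det := by
    rw [det_mul, det_conjTranspose]
    exact hW.star.mul hGdet
  have hEq : (Wᴴ * G) *ᵥ u = Pi.single k 1 := by
    rw [hu, mulVec_mulVec, mul_nonsing_inv _ hWG, one_mulVec]
  have hu0 : u ≠ 0 := by
    intro h
    have h2 := congrFun hEq k
    rw [h, mulVec_zero] at h2
    simpa using h2.symm
  -- det identity
  have hstar_single : star (Pi.single k 1 : Fin M → ℂ) = Pi.single k 1 := by
    ext i; by_cases h : i = k <;> simp [Pi.single_apply, h]
  have key : ∀ w : Fin M → ℂ, star u ⬝ᵥ (G *ᵥ w) = (W⁻¹ *ᵥ w) k := by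
    intro w
    calc star u ⬝ᵥ (G *ᵥ w) = star u ⬝ᵥ ((G * W) *ᵥ (W⁻¹ *ᵥ w)) := by
          rw [mulVec_mulVec, Matrix.mul_assoc, mul_nonsing_inv _ hW, Matrix.mul_one]
      _ = (star u ᵥ* (G * W)) ⬝ᵥ (W⁻¹ *ᵥ w) := dotProduct_mulVec _ _ _
      _ = star ((Wᴴ * G) *ᵥ u) ⬝ᵥ (W⁻¹ *ᵥ w) := by
          rw [star_mulVec, conjTranspose_mul, conjTranspose_conjTranspose, hG.1.eq]
      _ = (W⁻¹ *ᵥ w) k := by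
          rw [hEq, hstar_single, single_dotProduct, one_mul]
  have hdet : ∀ w : Fin M → ℂ,
      (W.updateCol k w).det = W.det * (star u ⬝ᵥ (G *ᵥ w)) := by
    intro w
    rw [key w, ← cramer_apply, cramer_eq_adjugate_mulVec]
    have h2 : w = W *ᵥ (W⁻¹ *ᵥ w) := by
      rw [mulVec_mulVec, mul_nonsing_inv _ hW, one_mulVec]
    conv_lhs => rw [h2]
    rw [mulVec_mulVec, adjugate_mul, smul_mulVec, one_mulVec]
    simp [smul_eq_mul]
  -- Cauchy–Schwarz for the G-inner product
  obtain ⟨S, hSh, hSS⟩ : ∃ S : Matrix (Fin M) (Fin M) ℂ, Sᴴ = S ∧ S * S = G := by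
    open scoped MatrixOrder in
    exact ⟨CFC.sqrt G, (CFC.sqrt_nonneg G).isSelfAdjoint.star_eq,
      CFC.sqrt_mul_sqrt_self G hG.posSemidef.nonneg⟩
  have hfact : ∀ x y : Fin M → ℂ, star x ⬝ᵥ (G *ᵥ y) = star (S *ᵥ x) ⬝ᵥ (S *ᵥ y) := by
    intro x y
    calc star x ⬝ᵥ (G *ᵥ y) = star x ⬝ᵥ (S *ᵥ (S *ᵥ y)) := by
          rw [mulVec_mulVec, hSS]
      _ = (star x ᵥ* S) ⬝ᵥ (S *ᵥ y) := dotProduct_mulVec _ _ _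
      _ = star (S *ᵥ x) ⬝ᵥ (S *ᵥ y) := by rw [star_mulVec, hSh]
  have hCS : ∀ w : Fin M → ℂ, ‖star u ⬝ᵥ (G *ᵥ w)‖ ^ 2 ≤
      (star u ⬝ᵥ (G *ᵥ u)).re * (star w ⬝ᵥ (G *ᵥ w)).re := by
    intro w
    rw [hfact u w, hfact u u, hfact w w]
    exact cs_aux (S *ᵥ u) (S *ᵥ w)
  -- positivity facts
  set s : ℝ := (star u ⬝ᵥ (G *ᵥ u)).re with hsdef
  have hGu := hG.dotProduct_mulVec_pos hu0
  have hspos : 0 < s := by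
    have := (Complex.lt_def.mp hGu).1
    simpa [hsdef] using this
  have hsim : (star u ⬝ᵥ (G *ᵥ u)).im = 0 := by
    have := (Complex.lt_def.mp hGu).2
    simpa using this.symm
  have hsc : (star u ⬝ᵥ (G *ᵥ u)) = (s : ℂ) := by
    apply Complex.ext
    · simp [hsdef]
    · simp [hsim]
  have hdW : (0 : ℝ) < ‖W.det‖ := by
    rw [norm_pos_iff]
    exact hW.ne_zero
  refine ⟨hu0, ?_⟩
  intro ws hws
  set a : ℝ := (Real.sqrt s)⁻¹ with hadef
  have hsqrt_pos : 0 < Real.sqrt s := Real.sqrt_pos.mpr hspos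
  have hapos : 0 < a := inv_pos.mpr hsqrt_pos
  -- value of c at ws
  have hc_ws : star u ⬝ᵥ (G *ᵥ ws) = ((a * s : ℝ) : ℂ) := by
    rw [hws, mulVec_smul, dotProduct_smul, hsc, smul_eq_mul]
    push_cast
    ring
  have h_as : a * s = Real.sqrt s := by
    rw [hadef, ← Real.mul_self_sqrt hspos.le]
    field_simp
    rw [Real.sqrt_sq hsqrt_pos.le]
  -- quadratic value at ws
  have ht_ws : (star ws ⬝ᵥ (G *ᵥ ws)).re = 1 := by
    have h1 : star ws ⬝ᵥ (G *ᵥ ws) = ((a * (a * s) : ℝ) : ℂ) := by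
      rw [hws, star_smul, smul_dotProduct, mulVec_smul, dotProduct_smul, hsc]
      simp only [smul_eq_mul, Complex.star_def, Complex.conj_ofReal]
      push_cast
      ring
    rw [h1, Complex.ofReal_re, h_as, hadef]
    field_simp
  have hdet_ws : (W.updateCol k ws).det = W.det * ((a * s : ℝ) : ℂ) := by
    rw [hdet, hc_ws]
  have hUnit_ws : IsUnit (W.updateCol k ws).det := by
    rw [isUnit_iff_ne_zero, hdet_ws]
    refine mul_ne_zero hW.ne_zero ?_
    rw [Complex.ofReal_ne_zero]
    positivity
  have habs_ws : ‖(W.updateCol k ws).det‖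
      = ‖W.det‖ * Real.sqrt s := by
    rw [hdet_ws, norm_mul, Complex.norm_real, Real.norm_eq_abs, abs_of_pos (by positivity), h_as]
  refine ⟨hUnit_ws, ?_⟩
  intro w hw
  set c : ℂ := star u ⬝ᵥ (G *ᵥ w) with hcdef
  have hdetw : (W.updateCol k w).det = W.det * c := hdet w
  have hmulne : W.det * c ≠ 0 := by rw [← hdetw]; exact hw.ne_zero
  have hcne : c ≠ 0 := fun h => hmulne (by rw [h, mul_zero])
  have hw0 : w ≠ 0 := by
    rintro rfl
    exact hcne (by simp [hcdef])
  set t : ℝ := (star w ⬝ᵥ (G *ᵥ w)).re with htdef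
  have htpos : 0 < t := by
    have := (Complex.lt_def.mp (hG.dotProduct_mulVec_pos hw0)).1
    simpa [htdef] using this
  have habsc : 0 < ‖c‖ := norm_pos_iff.mpr hcne
  have hcs : ‖c‖ ^ 2 ≤ s * t := hCS w
  -- logarithmic estimates
  have hlog1 : Real.log (‖c‖ ^ 2) ≤ Real.log (s * t) := by
    exact Real.log_le_log (by positivity) hcs
  have hlog2 : Real.log (‖c‖ ^ 2) = 2 * Real.log (‖c‖) := by
    rw [show (2 : ℕ) = 2 from rfl] at *
    rw [Real.log_pow]; push_cast; ring
  have hlog3 : Real.log (s * t) = Real.log s + Real.log t :=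
    Real.log_mul hspos.ne' htpos.ne'
  have hlog4 : Real.log t ≤ t - 1 := Real.log_le_sub_one_of_pos htpos
  -- compute both costs
  have hfw : fCost G W k w
      = t - 2 * (Real.log (‖W.det‖) + Real.log (‖c‖)) := by
    unfold fCost
    rw [hdetw, norm_mul, Real.log_mul hdW.ne' habsc.ne']
  have hfws : fCost G W k ws
      = 1 - 2 * (Real.log (‖W.det‖) + Real.log s / 2) := by
    unfold fCost
    rw [ht_ws, habs_ws, Real.log_mul hdW.ne' hsqrt_pos.ne', Real.log_sqrt hspos.le]
  rw [hfw, hfws]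
  linarith
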